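/- Let k be a commutative ring, κ ∈ k, and let M be the free k-module with basis {u_n : n ≥ 0}. Let ⋄ : M × M → M be the k-bilinear map determined by u_m ⋄ u_n = Σ_{r=0}^{min(m,n)} C(m+n−r, m)·C(m, r)·κ^r·u_{m+n−2r}. Then ⋄ is associative: (x ⋄ y) ⋄ z = x ⋄ (y ⋄ z) for all x, y, z ∈ M. In particular, (M, ⋄) is a commutative unital k-algebra with unit u_0. -/

import Mathlib

open Polynomial Finset

def bco (m n r : ℕ) : ℕ := m.choose r * n.choose r * (m + n - r).choose r * (r.factorial)^2

lemma bco_zero {m n r : ℕ} (h : ¬ (r ≤ m ∧ r ≤ n)) : bco m n r = 0 := by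
  rcases not_and_or.1 h with h | h
  · simp [bco, Nat.choose_eq_zero_of_lt (not_le.1 h)]
  · simp [bco, Nat.choose_eq_zero_of_lt (not_le.1 h)]
lemma bco_comm (m n r : ℕ) : bco m n r = bco n m r := by
  unfold bco; rw [Nat.add_comm m n]; ring

lemma bfact {m n r : ℕ} (hm : r ≤ m) (hn : r ≤ n) :
    bco m n r * ((m - r).factorial * (n - r).factorial * (m + n - 2*r).factorial * r.factorial)
      = m.factorial * n.factorial * (m + n - r).factorial := by
  have h1 := Nat.choose_mul_factorial_mul_factorial hm
  have h2 := Nat.choose_mul_factorial_mul_factorial hn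
  have hr : r ≤ m + n - r := by omega
  have h3 := Nat.choose_mul_factorial_mul_factorial hr
  have e : m + n - r - r = m + n - 2*r := by omega
  rw [e] at h3
  calc bco m n r * ((m - r).factorial * (n - r).factorial * (m + n - 2*r).factorial * r.factorial)
      = (m.choose r * r.factorial * (m-r).factorial) * ((n.choose r * r.factorial * (n-r).factorial)
        * (((m+n-r).choose r * r.factorial * (m+n-2*r).factorial))) := by
        unfold bco; ring
    _ = m.factorial * n.factorial * (m + n - r).factorial := by rw [h1, h2, h3]; ring

lemma bco_edge {a d : ℕ} (h : a ≤ d) :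
    bco d a a * ((d - a).factorial)^2 = (d.factorial)^2 := by
  have h1 := Nat.choose_mul_factorial_mul_factorial h
  have e : d + a - a = d := by omega
  have : bco d a a * ((d - a).factorial)^2 = (d.choose a * a.factorial * (d-a).factorial)^2 := by
    unfold bco; rw [e, Nat.choose_self]; ring
  rw [this, h1]

lemma key (m n r : ℕ) :
    bco (m+2) n (r+1) + (m+1)^2 * bco m n r
      = bco (m+1) n (r+1) + (m+n+1-2*r)^2 * bco (m+1) n r := by
  rcases Nat.lt_or_ge n r with hn | hn
  · rw [bco_zero (m := m+2) (n := n) (r := r+1) (by omega),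
      bco_zero (m := m) (n := n) (r := r) (by omega),
      bco_zero (m := m+1) (n := n) (r := r+1) (by omega),
      bco_zero (m := m+1) (n := n) (r := r) (by omega)]
    simp
  rcases Nat.lt_or_ge m r with hm | hm
  · -- m < r ≤ n
    rcases Nat.lt_or_ge (m+1) r with hm2 | hm2
    · rw [bco_zero (m := m+2) (n := n) (r := r+1) (by omega),
        bco_zero (m := m) (n := n) (r := r) (by omega),
        bco_zero (m := m+1) (n := n) (r := r+1) (by omega),
        bco_zero (m := m+1) (n := n) (r := r) (by omega)]
      simp
    have hr : r = m + 1 := by omega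
    subst hr
    rcases Nat.eq_or_lt_of_le hn with h | h
    · -- n = m+1
      rw [bco_zero (m := m+2) (n := n) (r := m+2) (by omega),
        bco_zero (m := m) (n := n) (r := m+1) (by omega),
        bco_zero (m := m+1) (n := n) (r := m+2) (by omega)]
      have : m + n + 1 - 2*(m+1) = 0 := by omega
      rw [this]
      simp
    · -- edge B : m+2 ≤ n
      rw [bco_zero (m := m) (n := n) (r := m+1) (by omega),
        bco_zero (m := m+1) (n := n) (r := m+2) (by omega)]
      have e1 : m + n + 1 - 2*(m+1) = n - m - 1 := by omega
      rw [e1]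
      simp only [Nat.mul_zero, Nat.add_zero, Nat.zero_add]
      apply Nat.eq_of_mul_eq_mul_right (pow_pos (Nat.factorial_pos (n-m-1)) 2)
      have E1 := bco_edge (show m+2 ≤ n by omega)
      have E2 := bco_edge (show m+1 ≤ n by omega)
      rw [bco_comm (m+2) n, bco_comm (m+1) n]
      have f2 : (n - m - 1).factorial = (n-m-1) * (n - (m+2)).factorial := by
        have e : n - m - 1 = (n - (m+2)) + 1 := by omega
        rw [e, Nat.factorial_succ]
      have f3 : n - (m+1) = n - m - 1 := by omega
      calc bco n (m+2) (m+1+1) * ((n-m-1).factorial)^2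
          = (bco n (m+2) (m+2) * ((n - (m+2)).factorial)^2) * (n-m-1)^2 := by
            rw [f2]; ring
        _ = (n.factorial)^2 * (n-m-1)^2 := by rw [E1]
        _ = (n-m-1)^2 * (bco n (m+1) (m+1) * ((n - (m+1)).factorial)^2) := by rw [E2]; ring
        _ = (n-m-1)^2 * bco n (m+1) (m+1) * ((n-m-1).factorial)^2 := by rw [f3]; ring
  · -- r ≤ m, r ≤ n
    rcases Nat.eq_or_lt_of_le hn with h | hlt
    · -- r = n ≤ m : edge A
      subst h
      rw [bco_zero (m := m+2) (n := r) (r := r+1) (by omega),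
        bco_zero (m := m+1) (n := r) (r := r+1) (by omega)]
      have e1 : m + r + 1 - 2*r = m + 1 - r := by omega
      rw [e1]
      simp only [Nat.zero_add]
      apply Nat.eq_of_mul_eq_mul_right (pow_pos (Nat.factorial_pos (m+1-r)) 2)
      have E1 := bco_edge (show r ≤ m by omega)
      have E2 := bco_edge (show r ≤ m+1 by omega)
      have f1 : (m + 1 - r).factorial = (m+1-r) * (m - r).factorial := by
        have e : m + 1 - r = (m - r) + 1 := by omega
        rw [e, Nat.factorial_succ]
      have f3 : m + 1 - r = (m+1) - r := by omega
      calc (m+1)^2 * bco m r r * ((m+1-r).factorial)^2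
          = (bco m r r * ((m-r).factorial)^2) * ((m+1)^2 * (m+1-r)^2) := by rw [f1]; ring
        _ = (m.factorial)^2 * ((m+1)^2 * (m+1-r)^2) := by rw [E1]
        _ = (m+1-r)^2 * (bco (m+1) r r * (((m+1) - r).factorial)^2) := by
            rw [E2]
            rw [show (m+1).factorial = (m+1) * m.factorial from Nat.factorial_succ m]
            ring
        _ = (m+1-r)^2 * bco (m+1) r r * ((m+1-r).factorial)^2 := by rw [← f3]; ring
    · -- generic regime r ≤ m, r+1 ≤ n
      obtain ⟨a, rfl⟩ : ∃ a, m = r + a := ⟨m - r, by omega⟩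
      obtain ⟨e, rfl⟩ : ∃ e, n = r + 1 + e := ⟨n - r - 1, by omega⟩
      have q1 := bfact (show r+1 ≤ r+a+2 by omega) (show r+1 ≤ r+1+e by omega)
      have q2 := bfact (show r ≤ r+a by omega) (show r ≤ r+1+e by omega)
      have q3 := bfact (show r+1 ≤ r+a+1 by omega) (show r+1 ≤ r+1+e by omega)
      have q4 := bfact (show r ≤ r+a+1 by omega) (show r ≤ r+1+e by omega)
      simp only [show r+a+2-(r+1) = a+1 from by omega, show r+1+e-(r+1) = e from by omega,
        show r+a+2+(r+1+e)-2*(r+1) = a+e+1 from by omega,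
        show r+a+2+(r+1+e)-(r+1) = a+e+r+2 from by omega,
        show r+a-r = a from by omega, show r+1+e-r = e+1 from by omega,
        show r+a+(r+1+e)-2*r = a+e+1 from by omega,
        show r+a+(r+1+e)-r = a+e+r+1 from by omega,
        show r+a+1-(r+1) = a from by omega,
        show r+a+1+(r+1+e)-2*(r+1) = a+e from by omega,
        show r+a+1+(r+1+e)-(r+1) = a+e+r+1 from by omega,
        show r+a+1-r = a+1 from by omega,
        show r+a+1+(r+1+e)-2*r = a+e+2 from by omega,
        show r+a+1+(r+1+e)-r = a+e+r+2 from by omega,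
        show r+a+(r+1+e)+1-2*r = a+e+2 from by omega] at q1 q2 q3 q4 ⊢
      have cast_goal : ((bco (r+a+2) (r+1+e) (r+1) + (r+a+1)^2 * bco (r+a) (r+1+e) r : ℕ) : ℚ)
          = ((bco (r+a+1) (r+1+e) (r+1) + (a+e+2)^2 * bco (r+a+1) (r+1+e) r : ℕ) : ℚ) := by
        have Q1 : ((bco (r+a+2) (r+1+e) (r+1) : ℕ) : ℚ) *
            (((a+1).factorial : ℚ) * (e.factorial : ℚ) * ((a+e+1).factorial : ℚ) * ((r+1).factorial : ℚ))
            = ((r+a+2).factorial : ℚ) * ((r+1+e).factorial : ℚ) * ((a+e+r+2).factorial : ℚ) := by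
          exact_mod_cast congrArg (Nat.cast (R := ℚ)) q1
        have Q2 : ((bco (r+a) (r+1+e) r : ℕ) : ℚ) *
            ((a.factorial : ℚ) * ((e+1).factorial : ℚ) * ((a+e+1).factorial : ℚ) * (r.factorial : ℚ))
            = ((r+a).factorial : ℚ) * ((r+1+e).factorial : ℚ) * ((a+e+r+1).factorial : ℚ) := by
          exact_mod_cast congrArg (Nat.cast (R := ℚ)) q2
        have Q3 : ((bco (r+a+1) (r+1+e) (r+1) : ℕ) : ℚ) *
            ((a.factorial : ℚ) * (e.factorial : ℚ) * ((a+e).factorial : ℚ) * ((r+1).factorial : ℚ))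
            = ((r+a+1).factorial : ℚ) * ((r+1+e).factorial : ℚ) * ((a+e+r+1).factorial : ℚ) := by
          exact_mod_cast congrArg (Nat.cast (R := ℚ)) q3
        have Q4 : ((bco (r+a+1) (r+1+e) r : ℕ) : ℚ) *
            (((a+1).factorial : ℚ) * ((e+1).factorial : ℚ) * ((a+e+2).factorial : ℚ) * (r.factorial : ℚ))
            = ((r+a+1).factorial : ℚ) * ((r+1+e).factorial : ℚ) * ((a+e+r+2).factorial : ℚ) := by
          exact_mod_cast congrArg (Nat.cast (R := ℚ)) q4
        have B1 : ((bco (r+a+2) (r+1+e) (r+1) : ℕ) : ℚ)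
            = ((r+a+2).factorial : ℚ) * ((r+1+e).factorial : ℚ) * ((a+e+r+2).factorial : ℚ) /
              (((a+1).factorial : ℚ) * (e.factorial : ℚ) * ((a+e+1).factorial : ℚ) * ((r+1).factorial : ℚ)) := by
          rw [eq_div_iff (by positivity)]; exact Q1
        have B2 : ((bco (r+a) (r+1+e) r : ℕ) : ℚ)
            = ((r+a).factorial : ℚ) * ((r+1+e).factorial : ℚ) * ((a+e+r+1).factorial : ℚ) /
              ((a.factorial : ℚ) * ((e+1).factorial : ℚ) * ((a+e+1).factorial : ℚ) * (r.factorial : ℚ)) := by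
          rw [eq_div_iff (by positivity)]; exact Q2
        have B3 : ((bco (r+a+1) (r+1+e) (r+1) : ℕ) : ℚ)
            = ((r+a+1).factorial : ℚ) * ((r+1+e).factorial : ℚ) * ((a+e+r+1).factorial : ℚ) /
              ((a.factorial : ℚ) * (e.factorial : ℚ) * ((a+e).factorial : ℚ) * ((r+1).factorial : ℚ)) := by
          rw [eq_div_iff (by positivity)]; exact Q3
        have B4 : ((bco (r+a+1) (r+1+e) r : ℕ) : ℚ)
            = ((r+a+1).factorial : ℚ) * ((r+1+e).factorial : ℚ) * ((a+e+r+2).factorial : ℚ) /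
              (((a+1).factorial : ℚ) * ((e+1).factorial : ℚ) * ((a+e+2).factorial : ℚ) * (r.factorial : ℚ)) := by
          rw [eq_div_iff (by positivity)]; exact Q4
        push_cast
        rw [B1, B2, B3, B4]
        -- expand shifted factorials into atoms
        simp only [show a+e+r+2 = (a+e+r+1)+1 from by omega, show r+a+2 = (r+a+1)+1 from by omega,
          show (r+a+1 : ℕ) = (r+a)+1 from by omega, show (a+e+2 : ℕ) = (a+e+1)+1 from by omega,
          show (a+e+1 : ℕ) = (a+e)+1 from by omega,
          Nat.factorial_succ]
        push_cast
        have ha : (a.factorial : ℚ) ≠ 0 := by positivity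
        have he : (e.factorial : ℚ) ≠ 0 := by positivity
        have hr' : (r.factorial : ℚ) ≠ 0 := by positivity
        have hae : ((a+e).factorial : ℚ) ≠ 0 := by positivity
        have hra : ((r+a).factorial : ℚ) ≠ 0 := by positivity
        have haer : ((a+e+r+1).factorial : ℚ) ≠ 0 := by positivity
        field_simp
        ring
      exact_mod_cast cast_goal

lemma bco_zero' (m n : ℕ) : bco m n 0 = 1 := by simp [bco]

noncomputable def kR : Polynomial (Polynomial ℤ) := Polynomial.C Polynomial.X

noncomputable def FF : ℕ → Polynomial (Polynomial ℤ)
  | 0 => 1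
  | 1 => Polynomial.X
  | (n+2) => Polynomial.X * FF (n+1) - Polynomial.C (Polynomial.C (((n:ℤ)+1)^2) * Polynomial.X) * FF n

lemma FF_succ (n : ℕ) : FF (n+2) = X * FF (n+1) - C (C (((n:ℤ)+1)^2) * X) * FF n := rfl

lemma coeff_cast (j : ℕ) : ((j : ℕ) : Polynomial (Polynomial ℤ)) = C (C (j : ℤ)) := by simp

lemma Csq (j : ℕ) : (((j+1 : ℕ)) : Polynomial (Polynomial ℤ))^2 * kR = C (C (((j:ℤ)+1)^2) * X) := by
  rw [coeff_cast, kR, map_mul, ← map_pow, ← map_pow]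
  congr 2

lemma FF_succ' (n : ℕ) :
    FF (n+2) = X * FF (n+1) - ((n+1 : ℕ) : Polynomial (Polynomial ℤ))^2 * kR * FF n := by
  rw [FF_succ, Csq]

lemma xFF (N : ℕ) : X * FF N = FF (N+1) + ((N : ℕ) : Polynomial (Polynomial ℤ))^2 * kR * FF (N-1) := by
  cases N with
  | zero => simp [FF]
  | succ n =>
    rw [FF_succ' n, show (n+1-1 : ℕ) = n from rfl]
    ring

theorem Fprod0 (m : ℕ) : ∀ n : ℕ, FF m * FF n
    = ∑ r ∈ range (n+1), (bco m n r : Polynomial (Polynomial ℤ)) * kR^r * FF (m+n-2*r) := by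
  induction m using Nat.twoStepInduction with
  | zero =>
    intro n
    rw [Finset.sum_eq_single 0]
    · simp [bco, FF]
    · intro b _ hb
      have : bco 0 n b = 0 := bco_zero (by omega)
      simp [this]
    · intro h
      exact absurd (Finset.mem_range.2 (by omega)) h
  | one =>
    intro n
    have hL : FF 1 * FF n = FF (n+1) + ((n : ℕ) : Polynomial (Polynomial ℤ))^2 * kR * FF (n-1) := by
      rw [show FF 1 = X from rfl]; exact xFF n
    rw [hL]
    rw [show (∑ r ∈ range (n+1), (bco 1 n r : Polynomial (Polynomial ℤ)) * kR^r * FF (1+n-2*r))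
        = ∑ r ∈ range (min n 1 + 1), (bco 1 n r : Polynomial (Polynomial ℤ)) * kR^r * FF (1+n-2*r) from
      (Finset.sum_subset (Finset.range_subset_range.2 (by omega)) (fun x _ hx => by
        have : bco 1 n x = 0 := bco_zero (by simp [Finset.mem_range] at hx; omega)
        simp [this])).symm]
    cases n with
    | zero => simp [bco, FF]
    | succ n' =>
      rw [show min (n'+1) 1 = 1 from by omega]
      rw [Finset.sum_range_succ, Finset.sum_range_succ, Finset.sum_range_zero]
      have b0 : bco 1 (n'+1) 0 = 1 := bco_zero' 1 (n'+1)
      have b1 : bco 1 (n'+1) 1 = (n'+1) * (n'+1) := by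
        simp [bco, Nat.choose_one_right]
      rw [b0, b1, show (1+(n'+1)-2*0 : ℕ) = (n'+1)+1 from by omega,
        show (1+(n'+1)-2*1 : ℕ) = (n'+1)-1 from by omega]
      push_cast
      ring
  | more m ih1 ih2 =>
    intro n
    have hstart : FF (m+2) * FF n
        = X * (FF (m+1) * FF n) - ((m+1 : ℕ) : Polynomial (Polynomial ℤ))^2 * kR * (FF m * FF n) := by
      rw [FF_succ']; ring
    rw [hstart, ih1 n, ih2 n]
    have hA : X * (∑ r ∈ range (n+1), (bco (m+1) n r : Polynomial (Polynomial ℤ)) * kR^r * FF (m+1+n-2*r))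
        = (∑ r ∈ range (n+1), (bco (m+1) n r : Polynomial (Polynomial ℤ)) * kR^r * FF (m+2+n-2*r))
          + ∑ r ∈ range (n+1), (bco (m+1) n r : Polynomial (Polynomial ℤ))
              * ((m+1+n-2*r : ℕ) : Polynomial (Polynomial ℤ))^2 * kR^(r+1) * FF (m+2+n-2*(r+1)) := by
      rw [Finset.mul_sum, ← Finset.sum_add_distrib]
      refine Finset.sum_congr rfl (fun r _ => ?_)
      by_cases h : r ≤ m+1 ∧ r ≤ n
      · have e1 : m+1+n-2*r+1 = m+2+n-2*r := by omega
        have e2 : m+1+n-2*r-1 = m+2+n-2*(r+1) := by omega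
        rw [show X * ((bco (m+1) n r : Polynomial (Polynomial ℤ)) * kR^r * FF (m+1+n-2*r))
            = (bco (m+1) n r : Polynomial (Polynomial ℤ)) * kR^r * (X * FF (m+1+n-2*r)) from by ring,
          xFF (m+1+n-2*r), e1, e2]
        ring
      · have : bco (m+1) n r = 0 := bco_zero h
        simp [this]
    have hZ : ((m+1 : ℕ) : Polynomial (Polynomial ℤ))^2 * kR *
          (∑ r ∈ range (n+1), (bco m n r : Polynomial (Polynomial ℤ)) * kR^r * FF (m+n-2*r))
        = ∑ r ∈ range (n+1), ((m+1 : ℕ) : Polynomial (Polynomial ℤ))^2 * (bco m n r : Polynomial (Polynomial ℤ))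
            * kR^(r+1) * FF (m+2+n-2*(r+1)) := by
      rw [Finset.mul_sum]
      refine Finset.sum_congr rfl (fun r _ => ?_)
      rw [show m+n-2*r = m+2+n-2*(r+1) from by omega]
      ring
    rw [hA, hZ, sub_eq_iff_eq_add]
    -- extend target sum and A1 to range (n+2)
    have hg : (∑ s ∈ range (n+1), (bco (m+2) n s : Polynomial (Polynomial ℤ)) * kR^s * FF (m+2+n-2*s))
        = ∑ s ∈ range (n+2), (bco (m+2) n s : Polynomial (Polynomial ℤ)) * kR^s * FF (m+2+n-2*s) := by
      rw [Finset.sum_range_succ (n := n+1)]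
      have : bco (m+2) n (n+1) = 0 := bco_zero (by omega)
      simp [this]
    have ha1 : (∑ r ∈ range (n+1), (bco (m+1) n r : Polynomial (Polynomial ℤ)) * kR^r * FF (m+2+n-2*r))
        = ∑ r ∈ range (n+2), (bco (m+1) n r : Polynomial (Polynomial ℤ)) * kR^r * FF (m+2+n-2*r) := by
      rw [Finset.sum_range_succ (n := n+1)]
      have : bco (m+1) n (n+1) = 0 := bco_zero (by omega)
      simp [this]
    rw [hg, ha1, Finset.sum_range_succ' _ (n+1), Finset.sum_range_succ' _ (n+1)]
    have h0 : (bco (m+2) n 0 : Polynomial (Polynomial ℤ)) * kR^0 * FF (m+2+n-2*0)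
        = (bco (m+1) n 0 : Polynomial (Polynomial ℤ)) * kR^0 * FF (m+2+n-2*0) := by
      rw [bco_zero', bco_zero']
    have hsum : (∑ r ∈ range (n+1), (bco (m+1) n (r+1) : Polynomial (Polynomial ℤ)) * kR^(r+1) * FF (m+2+n-2*(r+1)))
          + ∑ r ∈ range (n+1), (bco (m+1) n r : Polynomial (Polynomial ℤ))
              * ((m+1+n-2*r : ℕ) : Polynomial (Polynomial ℤ))^2 * kR^(r+1) * FF (m+2+n-2*(r+1))
        = (∑ r ∈ range (n+1), (bco (m+2) n (r+1) : Polynomial (Polynomial ℤ)) * kR^(r+1) * FF (m+2+n-2*(r+1)))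
          + ∑ r ∈ range (n+1), ((m+1 : ℕ) : Polynomial (Polynomial ℤ))^2 * (bco m n r : Polynomial (Polynomial ℤ))
              * kR^(r+1) * FF (m+2+n-2*(r+1)) := by
      rw [← Finset.sum_add_distrib, ← Finset.sum_add_distrib]
      refine Finset.sum_congr rfl (fun r _ => ?_)
      have KC : ((bco (m+2) n (r+1) + (m+1)^2 * bco m n r : ℕ) : Polynomial (Polynomial ℤ))
          = ((bco (m+1) n (r+1) + (m+n+1-2*r)^2 * bco (m+1) n r : ℕ) : Polynomial (Polynomial ℤ)) := by
        exact_mod_cast congrArg (Nat.cast (R := Polynomial (Polynomial ℤ))) (key m n r)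
      push_cast at KC
      rw [show m+1+n-2*r = m+n+1-2*r from by omega]
      push_cast
      linear_combination (-(kR^(r+1) * FF (m+2+n-2*(r+1)))) * KC
    linear_combination hsum - h0

lemma FF_coeff_high : ∀ j, ∀ i, j < i → (FF j).coeff i = 0 := by
  intro j
  induction j using Nat.twoStepInduction with
  | zero => intro i hi; rw [show FF 0 = 1 from rfl, Polynomial.coeff_one]; simp; omega
  | one => intro i hi; rw [show FF 1 = X from rfl, Polynomial.coeff_X]; simp; omega
  | more m ih1 ih2 =>
    intro i hi
    rw [FF_succ, Polynomial.coeff_sub, Polynomial.coeff_C_mul]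
    obtain ⟨i', rfl⟩ : ∃ i', i = i' + 1 := ⟨i - 1, by omega⟩
    rw [Polynomial.coeff_X_mul, ih2 i' (by omega), ih1 (i'+1) (by omega)]
    simp

lemma FF_coeff_self : ∀ j, (FF j).coeff j = 1 := by
  intro j
  induction j using Nat.twoStepInduction with
  | zero => simp [FF]
  | one => simp [FF]
  | more m ih1 ih2 =>
    rw [FF_succ, Polynomial.coeff_sub, Polynomial.coeff_C_mul, Polynomial.coeff_X_mul, ih2,
      FF_coeff_high m (m+2) (by omega)]
    simp

lemma extract {N T : ℕ} (d : ℕ → ℤ)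
    (hvan : ∀ t, 2*t > N → d t = 0)
    (hsum : ∑ t ∈ range T, (d t : Polynomial (Polynomial ℤ)) * kR^t * FF (N-2*t) = 0) :
    ∀ t, t < T → d t = 0 := by
  have hterm : ∀ t i, ((d t : Polynomial (Polynomial ℤ)) * kR^t * FF (N-2*t)).coeff i
      = (C (d t) * X^t) * (FF (N-2*t)).coeff i := by
    intro t i
    have e : (d t : Polynomial (Polynomial ℤ)) * kR^t = C ((C (d t)) * X^t) := by
      simp [kR, map_mul, map_pow]
    rw [e, Polynomial.coeff_C_mul]
  intro t0
  induction t0 using Nat.strong_induction_on with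
  | _ t0 ih =>
    intro ht0
    rcases Nat.lt_or_ge N (2*t0) with hbig | hsmall
    · exact hvan t0 (by omega)
    have hco := congrArg (fun q => Polynomial.coeff q (N - 2*t0)) hsum
    simp only [Polynomial.finset_sum_coeff, Polynomial.coeff_zero] at hco
    rw [Finset.sum_eq_single t0] at hco
    · rw [hterm, FF_coeff_self] at hco
      have := congrArg (fun q => Polynomial.coeff q t0) hco
      simpa using this
    · intro t ht hne
      rw [hterm]
      rcases Nat.lt_or_ge t t0 with hlt | hgt
      · rw [ih t hlt (by omega)]; simp
      · rcases Nat.lt_or_ge N (2*t) with h2 | h2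
        · rw [hvan t (by omega)]; simp
        · rw [FF_coeff_high _ _ (by omega)]; simp
    · intro h; exact absurd (Finset.mem_range.2 ht0) h

lemma double_to_diag {M : Type*} [AddCommMonoid M] (T : ℕ) (f : ℕ → ℕ → M)
    (hf : ∀ r s, (T < r ∨ T < s) → f r s = 0) :
    ∑ r ∈ range (T+1), ∑ s ∈ range (T+1), f r s
      = ∑ t ∈ range (2*T+1), ∑ r ∈ range (t+1), f r (t-r) := by
  have h1 : ∑ q ∈ (range (T+1) ×ˢ range (T+1)), f q.1 q.2
      = ∑ q ∈ ((range (2*T+1) ×ˢ range (2*T+1)).filter (fun q => q.1 + q.2 ≤ 2*T)), f q.1 q.2 := by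
    apply Finset.sum_subset
    · intro q hq
      simp only [Finset.mem_product, Finset.mem_range, Finset.mem_filter] at *
      omega
    · intro q hq hnq
      simp only [Finset.mem_product, Finset.mem_range, Finset.mem_filter] at hq hnq
      exact hf q.1 q.2 (by omega)
  have h2 : ∑ q ∈ ((range (2*T+1) ×ˢ range (2*T+1)).filter (fun q => q.1 + q.2 ≤ 2*T)), f q.1 q.2
      = ∑ x ∈ (range (2*T+1)).sigma (fun t => range (t+1)), f x.2 (x.1 - x.2) := by
    apply Finset.sum_nbij' (i := fun q => (⟨q.1+q.2, q.1⟩ : Σ _ : ℕ, ℕ))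
      (j := fun x => ((x.2, x.1 - x.2) : ℕ × ℕ))
    · intro q hq
      simp only [Finset.mem_product, Finset.mem_range, Finset.mem_filter, Finset.mem_sigma] at *
      omega
    · intro x hx
      simp only [Finset.mem_product, Finset.mem_range, Finset.mem_filter, Finset.mem_sigma] at *
      omega
    · intro q hq
      simp only [Finset.mem_product, Finset.mem_range, Finset.mem_filter] at hq
      ext <;> simp <;> omega
    · intro x hx
      simp only [Finset.mem_sigma, Finset.mem_range] at hx
      ext <;> simp <;> omega
    · intro q hq
      show f q.1 q.2 = f q.1 (q.1 + q.2 - q.1)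
      congr 1
      omega
  rw [← Finset.sum_product (range (T+1)) (range (T+1)) (fun q => f q.1 q.2), h1, h2,
    Finset.sum_sigma (range (2*T+1)) (fun t => range (t+1)) (fun x => f x.2 (x.1 - x.2))]

lemma FprodT (m n T : ℕ) (h : n ≤ T) : FF m * FF n
    = ∑ r ∈ range (T+1), (bco m n r : Polynomial (Polynomial ℤ)) * kR^r * FF (m+n-2*r) := by
  rw [Fprod0 m n]
  apply Finset.sum_subset (Finset.range_subset_range.2 (by omega))
  intro x hx hnx
  have : bco m n x = 0 := bco_zero (by simp only [Finset.mem_range] at hnx; omega)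
  simp [this]

section
variable (m n p : ℕ)

def Q1 (t : ℕ) : ℕ := ∑ r ∈ range (t+1), bco m n r * bco (m+n-2*r) p (t-r)
def Q2 (t : ℕ) : ℕ := ∑ r ∈ range (t+1), bco n p r * bco m (n+p-2*r) (t-r)

lemma E1 : (FF m * FF n) * FF p
    = ∑ t ∈ range (2*(m+n+p)+1), (Q1 m n p t : Polynomial (Polynomial ℤ)) * kR^t
        * FF (m+n+p-2*t) := by
  set T := m+n+p with hT
  rw [FprodT m n T (by omega), Finset.sum_mul]
  have step1 : ∀ r ∈ range (T+1),
      ((bco m n r : Polynomial (Polynomial ℤ)) * kR^r * FF (m+n-2*r)) * FF p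
      = ∑ s ∈ range (T+1), ((bco m n r * bco (m+n-2*r) p s : ℕ) : Polynomial (Polynomial ℤ))
          * kR^(r+s) * FF (m+n+p-2*(r+s)) := by
    intro r _
    rw [show ((bco m n r : Polynomial (Polynomial ℤ)) * kR^r * FF (m+n-2*r)) * FF p
        = (bco m n r : Polynomial (Polynomial ℤ)) * kR^r * (FF (m+n-2*r) * FF p) from by ring,
      FprodT (m+n-2*r) p T (by omega), Finset.mul_sum]
    refine Finset.sum_congr rfl (fun s _ => ?_)
    by_cases hc : (r ≤ m ∧ r ≤ n) ∧ (s ≤ m+n-2*r ∧ s ≤ p)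
    · rw [show m+n-2*r+p-2*s = m+n+p-2*(r+s) from by omega]
      push_cast
      ring
    · rcases not_and_or.1 hc with h1 | h2
      · have : bco m n r = 0 := bco_zero h1
        simp [this]
      · have : bco (m+n-2*r) p s = 0 := bco_zero h2
        simp [this]
  rw [Finset.sum_congr rfl step1]
  rw [double_to_diag T _ ?hvan]
  · refine Finset.sum_congr rfl (fun t _ => ?_)
    have inner : ∀ r ∈ range (t+1),
        ((bco m n r * bco (m+n-2*r) p (t-r) : ℕ) : Polynomial (Polynomial ℤ))
          * kR^(r+(t-r)) * FF (m+n+p-2*(r+(t-r)))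
        = ((bco m n r * bco (m+n-2*r) p (t-r) : ℕ) : Polynomial (Polynomial ℤ))
          * (kR^t * FF (m+n+p-2*t)) := by
      intro r hr
      simp only [Finset.mem_range] at hr
      rw [show r+(t-r) = t from by omega]
      ring
    rw [Finset.sum_congr rfl inner, ← Finset.sum_mul, ← Nat.cast_sum]
    rw [show (Q1 m n p t : Polynomial (Polynomial ℤ))
        = ((∑ r ∈ range (t+1), bco m n r * bco (m+n-2*r) p (t-r) : ℕ) : Polynomial (Polynomial ℤ))
        from by rw [Q1]]
    ring
  · intro r s hrs
    rcases hrs with h | h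
    · have : bco m n r = 0 := bco_zero (by omega)
      simp [this]
    · have : bco (m+n-2*r) p s = 0 := bco_zero (by omega)
      simp [this]

lemma E2 : FF m * (FF n * FF p)
    = ∑ t ∈ range (2*(m+n+p)+1), (Q2 m n p t : Polynomial (Polynomial ℤ)) * kR^t
        * FF (m+n+p-2*t) := by
  set T := m+n+p with hT
  rw [FprodT n p T (by omega), Finset.mul_sum]
  have step1 : ∀ r ∈ range (T+1),
      FF m * ((bco n p r : Polynomial (Polynomial ℤ)) * kR^r * FF (n+p-2*r))
      = ∑ s ∈ range (T+1), ((bco n p r * bco m (n+p-2*r) s : ℕ) : Polynomial (Polynomial ℤ))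
          * kR^(r+s) * FF (m+n+p-2*(r+s)) := by
    intro r _
    rw [show FF m * ((bco n p r : Polynomial (Polynomial ℤ)) * kR^r * FF (n+p-2*r))
        = (bco n p r : Polynomial (Polynomial ℤ)) * kR^r * (FF m * FF (n+p-2*r)) from by ring,
      FprodT m (n+p-2*r) T (by omega), Finset.mul_sum]
    refine Finset.sum_congr rfl (fun s _ => ?_)
    by_cases hc : (r ≤ n ∧ r ≤ p) ∧ (s ≤ m ∧ s ≤ n+p-2*r)
    · rw [show m+(n+p-2*r)-2*s = m+n+p-2*(r+s) from by omega]
      push_cast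
      ring
    · rcases not_and_or.1 hc with h1 | h2
      · have : bco n p r = 0 := bco_zero h1
        simp [this]
      · have : bco m (n+p-2*r) s = 0 := bco_zero h2
        simp [this]
  rw [Finset.sum_congr rfl step1]
  rw [double_to_diag T _ ?hvan]
  · refine Finset.sum_congr rfl (fun t _ => ?_)
    have inner : ∀ r ∈ range (t+1),
        ((bco n p r * bco m (n+p-2*r) (t-r) : ℕ) : Polynomial (Polynomial ℤ))
          * kR^(r+(t-r)) * FF (m+n+p-2*(r+(t-r)))
        = ((bco n p r * bco m (n+p-2*r) (t-r) : ℕ) : Polynomial (Polynomial ℤ))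
          * (kR^t * FF (m+n+p-2*t)) := by
      intro r hr
      simp only [Finset.mem_range] at hr
      rw [show r+(t-r) = t from by omega]
      ring
    rw [Finset.sum_congr rfl inner, ← Finset.sum_mul, ← Nat.cast_sum]
    rw [show (Q2 m n p t : Polynomial (Polynomial ℤ))
        = ((∑ r ∈ range (t+1), bco n p r * bco m (n+p-2*r) (t-r) : ℕ) : Polynomial (Polynomial ℤ))
        from by rw [Q2]]
    ring
  · intro r s hrs
    rcases hrs with h | h
    · have : bco n p r = 0 := bco_zero (by omega)
      simp [this]
    · have : bco m (n+p-2*r) s = 0 := bco_zero (by omega)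
      simp [this]

lemma Q1_van {t : ℕ} (h : 2*t > m+n+p) : Q1 m n p t = 0 := by
  rw [Q1]
  apply Finset.sum_eq_zero
  intro r hr
  simp only [Finset.mem_range] at hr
  by_cases h1 : r ≤ m ∧ r ≤ n
  · by_cases h2 : t-r ≤ m+n-2*r ∧ t-r ≤ p
    · omega
    · rw [bco_zero h2, Nat.mul_zero]
  · rw [bco_zero h1, Nat.zero_mul]

lemma Q2_van {t : ℕ} (h : 2*t > m+n+p) : Q2 m n p t = 0 := by
  rw [Q2]
  apply Finset.sum_eq_zero
  intro r hr
  simp only [Finset.mem_range] at hr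
  by_cases h1 : r ≤ n ∧ r ≤ p
  · by_cases h2 : t-r ≤ m ∧ t-r ≤ n+p-2*r
    · omega
    · rw [bco_zero h2, Nat.mul_zero]
  · rw [bco_zero h1, Nat.zero_mul]

lemma assoc_b (t : ℕ) : Q1 m n p t = Q2 m n p t := by
  set T := m+n+p with hT
  have hassoc : (FF m * FF n) * FF p = FF m * (FF n * FF p) := mul_assoc _ _ _
  rw [E1, E2] at hassoc
  have hz : ∑ t ∈ range (2*T+1),
      (((Q1 m n p t : ℤ) - (Q2 m n p t : ℤ) : ℤ) : Polynomial (Polynomial ℤ)) * kR^t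
        * FF (T-2*t) = 0 := by
    have : ∀ t ∈ range (2*T+1),
        (((Q1 m n p t : ℤ) - (Q2 m n p t : ℤ) : ℤ) : Polynomial (Polynomial ℤ)) * kR^t
          * FF (T-2*t)
        = (Q1 m n p t : Polynomial (Polynomial ℤ)) * kR^t * FF (T-2*t)
          - (Q2 m n p t : Polynomial (Polynomial ℤ)) * kR^t * FF (T-2*t) := by
      intro t _
      push_cast
      ring
    rw [Finset.sum_congr rfl this, Finset.sum_sub_distrib, hassoc, sub_self]
  have hex := extract (N := T) (T := 2*T+1)
    (fun t => (Q1 m n p t : ℤ) - (Q2 m n p t : ℤ))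
    (fun t ht => by
      show (Q1 m n p t : ℤ) - (Q2 m n p t : ℤ) = 0
      rw [Q1_van m n p (by omega), Q2_van m n p (by omega)]; ring) hz
  rcases Nat.lt_or_ge t (2*T+1) with hlt | hge
  · have h0 : (Q1 m n p t : ℤ) - (Q2 m n p t : ℤ) = 0 := hex t hlt
    have h1 : (Q1 m n p t : ℤ) = (Q2 m n p t : ℤ) := by omega
    exact_mod_cast h1
  · rw [Q1_van m n p (by omega), Q2_van m n p (by omega)]

end


def cco (m n r : ℕ) : ℕ := (m + n - r).choose m * m.choose r

lemma cco_zero {m n r : ℕ} (h : ¬ (r ≤ m ∧ r ≤ n)) : cco m n r = 0 := by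
  rw [not_and_or, not_le, not_le] at h
  rcases h with h | h
  · simp [cco, Nat.choose_eq_zero_of_lt h]
  · rcases Nat.lt_or_ge m r with h2 | h2
    · simp [cco, Nat.choose_eq_zero_of_lt h2]
    · have : m + n - r < m := by omega
      simp [cco, Nat.choose_eq_zero_of_lt this]

lemma cfact {m n r : ℕ} (hm : r ≤ m) (hn : r ≤ n) :
    cco m n r * ((m - r).factorial * (n - r).factorial * r.factorial)
      = (m + n - r).factorial := by
  have h1 := Nat.choose_mul_factorial_mul_factorial hm
  have hm2 : m ≤ m + n - r := by omega
  have h2 := Nat.choose_mul_factorial_mul_factorial hm2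
  have e : m + n - r - m = n - r := by omega
  rw [e] at h2
  have key : cco m n r * ((m - r).factorial * (n - r).factorial * r.factorial) * m.factorial
      = (m + n - r).factorial * m.factorial := by
    calc cco m n r * ((m - r).factorial * (n - r).factorial * r.factorial) * m.factorial
        = ((m+n-r).choose m * m.factorial * (n-r).factorial) * (m.choose r * r.factorial * (m-r).factorial) := by
          unfold cco; ring
      _ = (m + n - r).factorial * m.factorial := by rw [h1, h2]
  exact Nat.eq_of_mul_eq_mul_right (Nat.factorial_pos m) key

lemma Q1_def (m n p t : ℕ) : Q1 m n p t = ∑ r ∈ range (t+1), bco m n r * bco (m+n-2*r) p (t-r) := rfl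
lemma Q2_def (m n p t : ℕ) : Q2 m n p t = ∑ r ∈ range (t+1), bco n p r * bco m (n+p-2*r) (t-r) := rfl

lemma cco_comm (m n r : ℕ) : cco m n r = cco n m r := by
  by_cases h : r ≤ m ∧ r ≤ n
  · have h1 := cfact h.1 h.2
    have h2 := cfact h.2 h.1
    rw [Nat.add_comm n m] at h2
    have e : cco m n r * ((m - r).factorial * (n - r).factorial * r.factorial)
        = cco n m r * ((m - r).factorial * (n - r).factorial * r.factorial) := by
      rw [h1]
      rw [show (m-r).factorial * (n-r).factorial = (n-r).factorial * (m-r).factorial from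
        Nat.mul_comm _ _]
      rw [h2]
    exact Nat.eq_of_mul_eq_mul_right (by positivity) e
  · rw [cco_zero h, cco_zero (by omega)]

lemma L1 (a b r : ℕ) : a.factorial * b.factorial * cco a b r
    = (a + b - 2*r).factorial * bco a b r := by
  by_cases h : r ≤ a ∧ r ≤ b
  · have hc := cfact h.1 h.2
    have hb := bfact h.1 h.2
    apply Nat.eq_of_mul_eq_mul_right
      (show 0 < (a-r).factorial * (b-r).factorial * r.factorial by positivity)
    calc a.factorial * b.factorial * cco a b r * ((a-r).factorial * (b-r).factorial * r.factorial)
        = a.factorial * b.factorial * (cco a b r * ((a-r).factorial * (b-r).factorial * r.factorial)) := by ring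
      _ = a.factorial * b.factorial * (a+b-r).factorial := by rw [hc]
      _ = bco a b r * ((a - r).factorial * (b - r).factorial * (a + b - 2*r).factorial * r.factorial) := hb.symm
      _ = (a + b - 2*r).factorial * bco a b r * ((a-r).factorial * (b-r).factorial * r.factorial) := by ring
  · rw [cco_zero h, bco_zero h]
    simp

lemma L2 (a b c r s : ℕ) : a.factorial * (b.factorial * c.factorial)
      * (cco a b r * cco (a+b-2*r) c s)
    = (a+b+c-2*(r+s)).factorial * (bco a b r * bco (a+b-2*r) c s) := by
  by_cases h1 : r ≤ a ∧ r ≤ b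
  · have e1 : a+b-2*r+c-2*s = a+b+c-2*(r+s) := by omega
    calc a.factorial * (b.factorial * c.factorial) * (cco a b r * cco (a+b-2*r) c s)
        = (a.factorial * b.factorial * cco a b r) * c.factorial * cco (a+b-2*r) c s := by ring
      _ = ((a+b-2*r).factorial * bco a b r) * c.factorial * cco (a+b-2*r) c s := by rw [L1]
      _ = bco a b r * ((a+b-2*r).factorial * c.factorial * cco (a+b-2*r) c s) := by ring
      _ = bco a b r * ((a+b-2*r+c-2*s).factorial * bco (a+b-2*r) c s) := by rw [L1]
      _ = (a+b+c-2*(r+s)).factorial * (bco a b r * bco (a+b-2*r) c s) := by rw [e1]; ring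
  · rw [cco_zero h1, bco_zero h1]
    simp

theorem assoc_c (m n p t : ℕ) :
    ∑ r ∈ range (t+1), cco m n r * cco (m+n-2*r) p (t-r)
      = ∑ r ∈ range (t+1), cco n p r * cco m (n+p-2*r) (t-r) := by
  apply Nat.eq_of_mul_eq_mul_left
    (show 0 < m.factorial * (n.factorial * p.factorial) by positivity)
  rw [Finset.mul_sum, Finset.mul_sum]
  have hL : ∀ r ∈ range (t+1),
      m.factorial * (n.factorial * p.factorial) * (cco m n r * cco (m+n-2*r) p (t-r))
      = (m+n+p-2*t).factorial * (bco m n r * bco (m+n-2*r) p (t-r)) := by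
    intro r hr
    simp only [Finset.mem_range] at hr
    rw [L2 m n p r (t-r), show r + (t-r) = t from by omega]
  have hR : ∀ r ∈ range (t+1),
      m.factorial * (n.factorial * p.factorial) * (cco n p r * cco m (n+p-2*r) (t-r))
      = (m+n+p-2*t).factorial * (bco n p r * bco m (n+p-2*r) (t-r)) := by
    intro r hr
    simp only [Finset.mem_range] at hr
    rw [cco_comm m (n+p-2*r) (t-r), bco_comm m (n+p-2*r) (t-r)]
    rw [show m.factorial * (n.factorial * p.factorial) * (cco n p r * cco (n+p-2*r) m (t-r))
        = n.factorial * (p.factorial * m.factorial) * (cco n p r * cco (n+p-2*r) m (t-r)) from by ring]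
    rw [L2 n p m r (t-r), show r + (t-r) = t from by omega,
      show n+p+m-2*t = m+n+p-2*t from by omega]
  rw [Finset.sum_congr rfl hL, Finset.sum_congr rfl hR, ← Finset.mul_sum, ← Finset.mul_sum,
    ← Q1_def, ← Q2_def, assoc_b]


/-- The basis vectors `u n = single n 1` of the free `k`-module `ℕ →₀0 k`. -/
noncomputable def uvec {k : Type*} [CommRing k] (n : ℕ) : ℕ →₀ k := Finsupp.single n 1

theorem stmt_10 {k : Type*} [CommRing k] (κ : k)
    (D : (ℕ →₀ k) →ₗ[k] (ℕ →₀ k) →ₗ[k] (ℕ →₀ k))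
    (hD : ∀ m n : ℕ, D (uvec m) (uvec n) =
      ∑ r ∈ Finset.range (min m n + 1),
        ((((m + n - r).choose m * m.choose r : ℕ) : k) * κ ^ r) •
          (uvec (m + n - 2 * r) : ℕ →₀ k)) :
    (∀ x y z : ℕ →₀ k, D (D x y) z = D x (D y z)) ∧
    (∀ x : ℕ →₀ k, D (uvec 0) x = x) ∧
    (∀ x : ℕ →₀ k, D x (uvec 0) = x) ∧
    (∀ x y : ℕ →₀ k, D x y = D y x) := by
  have hsingle : ∀ (a : ℕ) (b : k), Finsupp.single a b = b • uvec a := by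
    intro a b
    rw [uvec, Finsupp.smul_single', mul_one]
  have hD' : ∀ m n T : ℕ, n ≤ T → D (uvec m) (uvec n)
      = ∑ r ∈ range (T+1), ((cco m n r : k) * κ^r) • uvec (m+n-2*r) := by
    intro m n T h
    rw [hD m n]
    have : ∀ r : ℕ, (((m + n - r).choose m * m.choose r : ℕ) : k) = (cco m n r : k) := by
      intro r; rw [cco]
    simp only [this]
    apply Finset.sum_subset (Finset.range_subset_range.2 (by omega))
    intro x hx hnx
    simp only [Finset.mem_range] at hx hnx
    have : cco m n x = 0 := cco_zero (by omega)
    rw [this]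
    simp
  -- expansion of a left-nested product over a basis
  have hexp : ∀ m n p : ℕ, D (D (uvec m) (uvec n)) (uvec p)
      = ∑ t ∈ range (2*(m+n+p)+1),
          (((∑ r ∈ range (t+1), cco m n r * cco (m+n-2*r) p (t-r) : ℕ) : k) * κ^t)
            • uvec (m+n+p-2*t) := by
    intro m n p
    set T := m+n+p with hT
    rw [hD' m n T (by omega), map_sum]
    simp only [map_smul, LinearMap.sum_apply, LinearMap.smul_apply]
    have step1 : ∀ r ∈ range (T+1),
        ((cco m n r : k) * κ^r) • (D (uvec (m+n-2*r)) (uvec p))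
        = ∑ s ∈ range (T+1),
            (((cco m n r * cco (m+n-2*r) p s : ℕ) : k) * κ^(r+s)) • uvec (m+n+p-2*(r+s)) := by
      intro r _
      rw [hD' (m+n-2*r) p T (by omega), Finset.smul_sum]
      refine Finset.sum_congr rfl (fun s _ => ?_)
      rw [smul_smul]
      by_cases hc : (r ≤ m ∧ r ≤ n) ∧ (s ≤ m+n-2*r ∧ s ≤ p)
      · rw [show m+n-2*r+p-2*s = m+n+p-2*(r+s) from by omega]
        congr 1
        push_cast
        ring
      · rcases not_and_or.1 hc with h1 | h2
        · have : cco m n r = 0 := cco_zero h1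
          simp [this]
        · have : cco (m+n-2*r) p s = 0 := cco_zero h2
          simp [this]
    rw [Finset.sum_congr rfl step1]
    rw [double_to_diag T _ ?hvan]
    · refine Finset.sum_congr rfl (fun t _ => ?_)
      have inner : ∀ r ∈ range (t+1),
          (((cco m n r * cco (m+n-2*r) p (t-r) : ℕ) : k) * κ^(r+(t-r))) • uvec (m+n+p-2*(r+(t-r)))
          = (((cco m n r * cco (m+n-2*r) p (t-r) : ℕ) : k) * κ^t) • (uvec (m+n+p-2*t) : ℕ →₀ k) := by
        intro r hr
        simp only [Finset.mem_range] at hr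
        rw [show r+(t-r) = t from by omega]
      rw [Finset.sum_congr rfl inner, ← Finset.sum_smul, ← Finset.sum_mul, ← Nat.cast_sum]
    · intro r s hrs
      rcases hrs with h | h
      · have : cco m n r = 0 := cco_zero (by omega)
        simp [this]
      · have : cco (m+n-2*r) p s = 0 := cco_zero (by omega)
        simp [this]
  have hexp2 : ∀ m n p : ℕ, D (uvec m) (D (uvec n) (uvec p))
      = ∑ t ∈ range (2*(m+n+p)+1),
          (((∑ r ∈ range (t+1), cco n p r * cco m (n+p-2*r) (t-r) : ℕ) : k) * κ^t)
            • uvec (m+n+p-2*t) := by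
    intro m n p
    set T := m+n+p with hT
    rw [hD' n p T (by omega), map_sum]
    have step1 : ∀ r ∈ range (T+1),
        D (uvec m) (((cco n p r : k) * κ^r) • uvec (n+p-2*r))
        = ∑ s ∈ range (T+1),
            (((cco n p r * cco m (n+p-2*r) s : ℕ) : k) * κ^(r+s)) • uvec (m+n+p-2*(r+s)) := by
      intro r _
      rw [map_smul, hD' m (n+p-2*r) T (by omega), Finset.smul_sum]
      refine Finset.sum_congr rfl (fun s _ => ?_)
      rw [smul_smul]
      by_cases hc : (r ≤ n ∧ r ≤ p) ∧ (s ≤ m ∧ s ≤ n+p-2*r)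
      · rw [show m+(n+p-2*r)-2*s = m+n+p-2*(r+s) from by omega]
        congr 1
        push_cast
        ring
      · rcases not_and_or.1 hc with h1 | h2
        · have : cco n p r = 0 := cco_zero h1
          simp [this]
        · have : cco m (n+p-2*r) s = 0 := cco_zero h2
          simp [this]
    rw [Finset.sum_congr rfl step1]
    rw [double_to_diag T _ ?hvan2]
    · refine Finset.sum_congr rfl (fun t _ => ?_)
      have inner : ∀ r ∈ range (t+1),
          (((cco n p r * cco m (n+p-2*r) (t-r) : ℕ) : k) * κ^(r+(t-r))) • uvec (m+n+p-2*(r+(t-r)))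
          = (((cco n p r * cco m (n+p-2*r) (t-r) : ℕ) : k) * κ^t) • (uvec (m+n+p-2*t) : ℕ →₀ k) := by
        intro r hr
        simp only [Finset.mem_range] at hr
        rw [show r+(t-r) = t from by omega]
      rw [Finset.sum_congr rfl inner, ← Finset.sum_smul, ← Finset.sum_mul, ← Nat.cast_sum]
    · intro r s hrs
      rcases hrs with h | h
      · have : cco n p r = 0 := cco_zero (by omega)
        simp [this]
      · have : cco m (n+p-2*r) s = 0 := cco_zero (by omega)
        simp [this]
  have hbasis : ∀ m n p : ℕ, D (D (uvec m) (uvec n)) (uvec p) = D (uvec m) (D (uvec n) (uvec p)) := by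
    intro m n p
    rw [hexp m n p, hexp2 m n p]
    refine Finset.sum_congr rfl (fun t _ => ?_)
    rw [assoc_c m n p t]
  have hassoc : ∀ x y z : ℕ →₀ k, D (D x y) z = D x (D y z) := by
    intro x y z
    induction x using Finsupp.induction_linear with
    | zero => simp
    | add f g hf hg => simp [hf, hg]
    | single a b =>
      induction y using Finsupp.induction_linear with
      | zero => simp
      | add f g hf hg => simp [hf, hg]
      | single a' b' =>
        induction z using Finsupp.induction_linear with
        | zero => simp
        | add f g hf hg => simp [hf, hg]
        | single a'' b'' =>
          rw [hsingle a b, hsingle a' b', hsingle a'' b'']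
          simp only [map_smul, LinearMap.smul_apply, LinearMap.map_smul]
          rw [hbasis a a' a'']
  refine ⟨hassoc, ?_, ?_, ?_⟩
  · intro x
    induction x using Finsupp.induction_linear with
    | zero => simp
    | add f g hf hg => simp [hf, hg]
    | single a b =>
      have h0 : D (uvec 0) (uvec a) = uvec a := by
        rw [hD 0 a, show min 0 a = 0 from by omega, Finset.sum_range_one]
        norm_num
      rw [hsingle a b, map_smul, h0]
  · intro x
    induction x using Finsupp.induction_linear with
    | zero => simp
    | add f g hf hg => simp [hf, hg]
    | single a b =>
      have h0 : D (uvec a) (uvec 0) = uvec a := by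
        rw [hD a 0, show min a 0 = 0 from by omega, Finset.sum_range_one]
        norm_num
      rw [hsingle a b, map_smul, LinearMap.smul_apply, h0]
  · intro x y
    have hbc : ∀ m n : ℕ, D (uvec m) (uvec n) = D (uvec n) (uvec m) := by
      intro m n
      rw [hD' m n (m+n) (by omega), hD' n m (m+n) (by omega)]
      refine Finset.sum_congr rfl (fun r _ => ?_)
      rw [cco_comm m n r, Nat.add_comm m n]
    induction x using Finsupp.induction_linear with
    | zero => simp
    | add f g hf hg => simp [hf, hg]
    | single a b =>
      induction y using Finsupp.induction_linear with
      | zero => simp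
      | add f g hf hg => simp [hf, hg]
      | single a' b' =>
        rw [hsingle a b, hsingle a' b']
        simp only [map_smul, LinearMap.smul_apply, LinearMap.map_smul]
        rw [hbc a a', smul_smul, smul_smul, mul_comm]
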